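/- Let 𝒦 : ℝ → ℝ be Lebesgue integrable, ℓ ≥ 1 an integer, and define 𝒦_ℓ(y) = Σ_{i=1}^ℓ binom(ℓ,i)·(−1)^{i+1}·(1/i)·𝒦(y/i). Let d ≥ 1, j ∈ {1,…,d}, let f : ℝ^d → ℝ be bounded and measurable, and let h ∈ ℝ and x ∈ ℝ^d. Then ∫_ℝ 𝒦_ℓ(u)·(f(x + u·h·e_j) − f(x)) du = (−1)^{ℓ−1} ∫_ℝ 𝒦(z)·Δ^ℓ_{zh,j} f(x) dz. -/

import Mathlib

open MeasureTheory

/-- First-order difference operator with step `u` in the direction of the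
`j`-th variable: `Δ_{u,j} f (x) = f(x + u·e_j) − f(x)`. -/
noncomputable def diffOp {d : ℕ} (j : Fin d) (u : ℝ)
    (f : (Fin d → ℝ) → ℝ) : (Fin d → ℝ) → ℝ :=
  fun x => f (x + u • (Pi.single j 1 : Fin d → ℝ)) - f x

/-- `k`-th order difference operator `Δ^k_{u,j}`, defined by iteration. -/
noncomputable def diffIter {d : ℕ} (j : Fin d) (u : ℝ) (k : ℕ)
    (f : (Fin d → ℝ) → ℝ) : (Fin d → ℝ) → ℝ :=
  (diffOp j u)^[k] f

lemma diffOp_eq_fwdDiff {d : ℕ} (j : Fin d) (u : ℝ) :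
    diffOp j u = fwdDiff (u • (Pi.single j 1 : Fin d → ℝ)) := rfl

/-- Expansion of the iterated difference operator. -/
lemma diffIter_eq_sum {d : ℕ} (j : Fin d) (u : ℝ) (k : ℕ)
    (f : (Fin d → ℝ) → ℝ) (x : Fin d → ℝ) :
    diffIter j u k f x
      = ∑ i ∈ Finset.range (k + 1),
          ((-1 : ℝ) ^ (k - i) * (k.choose i : ℝ))
            * f (x + ((i : ℝ) * u) • (Pi.single j 1 : Fin d → ℝ)) := by
  have := fwdDiff_iter_eq_sum_shift (u • (Pi.single j 1 : Fin d → ℝ)) f k x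
  rw [diffIter, diffOp_eq_fwdDiff, this]
  refine Finset.sum_congr rfl fun i hi => ?_
  rw [zsmul_eq_mul]
  push_cast
  congr 2
  rw [← Nat.cast_smul_eq_nsmul ℝ, smul_smul]

/-- Alternating binomial sum vanishes for `k ≥ 1`. -/
lemma alt_sum_zero {k : ℕ} (hk : 1 ≤ k) :
    ∑ i ∈ Finset.range (k + 1), ((-1 : ℝ) ^ (k - i) * (k.choose i : ℝ)) = 0 := by
  have h0 : ∑ i ∈ Finset.range (k + 1), ((-1 : ℤ) ^ i * (k.choose i : ℤ)) = 0 :=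
    Int.alternating_sum_range_choose_of_ne (by omega)
  have h1 : ∑ i ∈ Finset.range (k + 1), ((-1 : ℝ) ^ (k - i) * (k.choose i : ℝ))
      = (-1 : ℝ) ^ k * ∑ i ∈ Finset.range (k + 1), ((-1 : ℝ) ^ i * (k.choose i : ℝ)) := by
    rw [Finset.mul_sum]
    refine Finset.sum_congr rfl fun i hi => ?_
    have hik : i ≤ k := by
      have := Finset.mem_range.mp hi; omega
    obtain ⟨m, rfl⟩ := Nat.exists_eq_add_of_le hik
    have : i + m - i = m := by omega
    rw [this]
    have hsq : (-1 : ℝ) ^ i * (-1 : ℝ) ^ i = 1 := by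
      rw [← pow_add]; exact Even.neg_one_pow ⟨i, rfl⟩
    rw [pow_add]
    linear_combination (-(-1 : ℝ) ^ m * (((i + m).choose i : ℝ))) * hsq
  rw [h1]
  have : ∑ i ∈ Finset.range (k + 1), ((-1 : ℝ) ^ i * (k.choose i : ℝ)) = 0 := by
    exact_mod_cast congrArg (Int.cast : ℤ → ℝ) h0
  rw [this, mul_zero]

theorem stmt9 (d ℓ : ℕ) (hd : 1 ≤ d) (hℓ : 1 ≤ ℓ) (j : Fin d)
    (K : ℝ → ℝ) (hK : Integrable K)
    (Kl : ℝ → ℝ)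
    (hKl : ∀ y : ℝ, Kl y
      = ∑ i ∈ Finset.Icc 1 ℓ,
          (ℓ.choose i : ℝ) * (-1 : ℝ) ^ (i + 1) * (1 / (i : ℝ)) * K (y / (i : ℝ)))
    (f : (Fin d → ℝ) → ℝ) (hf : Measurable f)
    (C : ℝ) (hfb : ∀ x, |f x| ≤ C)
    (h : ℝ) (x : Fin d → ℝ) :
    ∫ u, Kl u * (f (x + (u * h) • (Pi.single j 1 : Fin d → ℝ)) - f x)
      = (-1 : ℝ) ^ (ℓ - 1) * ∫ z, K z * diffIter j (z * h) ℓ f x := by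
  set e : Fin d → ℝ := (Pi.single j 1 : Fin d → ℝ) with he
  have hC0 : 0 ≤ C := le_trans (abs_nonneg _) (hfb x)
  -- the basic bounded measurable factor
  have hφm : ∀ c : ℝ, Measurable fun z : ℝ => f (x + (c * z) • e) - f x := by
    intro c
    exact (hf.comp (measurable_const.add ((measurable_id.const_mul c).smul_const e))).sub
      measurable_const
  have hφb : ∀ (c : ℝ) (z : ℝ), ‖f (x + (c * z) • e) - f x‖ ≤ C + C := by
    intro c z
    calc ‖f (x + (c * z) • e) - f x‖ ≤ ‖f (x + (c * z) • e)‖ + ‖f x‖ := norm_sub_le _ _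
    _ ≤ C + C := add_le_add (hfb _) (hfb _)
  -- G i z = K z * (f (x + (i * (z*h)) • e) - f x)
  set G : ℕ → ℝ → ℝ := fun i z => K z * (f (x + ((i : ℝ) * (z * h)) • e) - f x) with hG
  have hintG : ∀ i : ℕ, Integrable (G i) := by
    intro i
    have : G i = fun z => (f (x + ((i : ℝ) * h * z) • e) - f x) * K z := by
      funext z; simp only [hG]; ring_nf
    rw [this]
    exact hK.bdd_mul ((hφm ((i : ℝ) * h)).aestronglyMeasurable)
      (Filter.Eventually.of_forall fun z => hφb _ z)
  -- expansion of the iterated difference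
  have hΔ : ∀ z : ℝ, diffIter j (z * h) ℓ f x
      = ∑ i ∈ Finset.Icc 1 ℓ, ((-1 : ℝ) ^ (ℓ - i) * (ℓ.choose i : ℝ))
          * (f (x + ((i : ℝ) * (z * h)) • e) - f x) := by
    intro z
    rw [diffIter_eq_sum]
    have hzero := alt_sum_zero hℓ
    have step1 : ∑ i ∈ Finset.range (ℓ + 1),
        ((-1 : ℝ) ^ (ℓ - i) * (ℓ.choose i : ℝ)) * f (x + ((i : ℝ) * (z * h)) • e)
        = ∑ i ∈ Finset.range (ℓ + 1),
        ((-1 : ℝ) ^ (ℓ - i) * (ℓ.choose i : ℝ)) * (f (x + ((i : ℝ) * (z * h)) • e) - f x) := by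
      simp only [mul_sub, Finset.sum_sub_distrib, ← Finset.sum_mul, hzero, zero_mul, sub_zero]
    rw [step1]
    rw [show Finset.range (ℓ + 1) = Finset.Icc 0 ℓ from by
      rw [Finset.range_eq_Ico, Finset.Ico_add_one_right_eq_Icc]]
    refine (Finset.sum_subset (Finset.Icc_subset_Icc_left (Nat.zero_le 1)) ?_).symm
    intro i hi hni
    have : i = 0 := by
      simp only [Finset.mem_Icc] at hi hni; omega
    subst this
    simp
  -- RHS as a finite sum of integrals
  have hrhs : (∫ z, K z * diffIter j (z * h) ℓ f x)
      = ∑ i ∈ Finset.Icc 1 ℓ, ((-1 : ℝ) ^ (ℓ - i) * (ℓ.choose i : ℝ)) * ∫ z, G i z := by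
    have : ∀ z : ℝ, K z * diffIter j (z * h) ℓ f x
        = ∑ i ∈ Finset.Icc 1 ℓ, ((-1 : ℝ) ^ (ℓ - i) * (ℓ.choose i : ℝ)) * G i z := by
      intro z
      rw [hΔ z, Finset.mul_sum]
      exact Finset.sum_congr rfl fun i _ => by simp only [hG]; ring
    simp_rw [this]
    rw [integral_finset_sum _ (fun i _ => (hintG i).const_mul _)]
    exact Finset.sum_congr rfl fun i _ => integral_const_mul _ _
  -- change of variables for each i ≥ 1
  have hcv : ∀ i ∈ Finset.Icc 1 ℓ,
      (1 / (i : ℝ)) * (∫ u, K (u / (i : ℝ)) * (f (x + (u * h) • e) - f x))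
        = ∫ z, G i z := by
    intro i hi
    have hi1 : 1 ≤ i := (Finset.mem_Icc.mp hi).1
    have hipos : (0 : ℝ) < (i : ℝ) := by exact_mod_cast hi1
    have hine : (i : ℝ) ≠ 0 := ne_of_gt hipos
    set g : ℝ → ℝ := fun u => K (u / (i : ℝ)) * (f (x + (u * h) • e) - f x) with hg
    have hcmp := MeasureTheory.Measure.integral_comp_mul_left g (i : ℝ)
    have hgeq : ∀ z : ℝ, g ((i : ℝ) * z) = G i z := by
      intro z
      simp only [hg, hG]
      rw [mul_div_cancel_left₀ _ hine]
      ring_nf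
    have : (∫ z, G i z) = |(i : ℝ)⁻¹| • ∫ u, g u := by
      rw [← hcmp]
      exact integral_congr_ae (Filter.Eventually.of_forall fun z => (hgeq z).symm)
    rw [this, abs_of_pos (inv_pos.mpr hipos), smul_eq_mul, one_div]
  -- integrability of each LHS piece
  have hintg : ∀ i ∈ Finset.Icc 1 ℓ,
      Integrable (fun u => K (u / (i : ℝ)) * (f (x + (u * h) • e) - f x)) := by
    intro i hi
    have hi1 : 1 ≤ i := (Finset.mem_Icc.mp hi).1
    have hine : (i : ℝ) ≠ 0 := by positivity
    have hKi : Integrable (fun u : ℝ => K (u / (i : ℝ))) := hK.comp_div hine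
    have : (fun u => K (u / (i : ℝ)) * (f (x + (u * h) • e) - f x))
        = fun u => (f (x + (h * u) • e) - f x) * K (u / (i : ℝ)) := by
      funext u; ring_nf
    rw [this]
    exact hKi.bdd_mul ((hφm h).aestronglyMeasurable)
      (Filter.Eventually.of_forall fun z => hφb _ z)
  -- expand the LHS
  have hlhs : (∫ u, Kl u * (f (x + (u * h) • e) - f x))
      = ∑ i ∈ Finset.Icc 1 ℓ,
          ((ℓ.choose i : ℝ) * (-1 : ℝ) ^ (i + 1) * (1 / (i : ℝ)))
            * ∫ u, K (u / (i : ℝ)) * (f (x + (u * h) • e) - f x) := by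
    have : ∀ u : ℝ, Kl u * (f (x + (u * h) • e) - f x)
        = ∑ i ∈ Finset.Icc 1 ℓ,
            ((ℓ.choose i : ℝ) * (-1 : ℝ) ^ (i + 1) * (1 / (i : ℝ)))
              * (K (u / (i : ℝ)) * (f (x + (u * h) • e) - f x)) := by
      intro u
      rw [hKl u, Finset.sum_mul]
      exact Finset.sum_congr rfl fun i _ => by ring
    simp_rw [this]
    rw [integral_finset_sum _ (fun i hi => (hintg i hi).const_mul _)]
    exact Finset.sum_congr rfl fun i _ => integral_const_mul _ _
  rw [hlhs, hrhs, Finset.mul_sum]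
  refine Finset.sum_congr rfl fun i hi => ?_
  have hcvi := hcv i hi
  have hi1 : 1 ≤ i := (Finset.mem_Icc.mp hi).1
  have hile : i ≤ ℓ := (Finset.mem_Icc.mp hi).2
  -- sign identity
  have hsign : (-1 : ℝ) ^ (ℓ - 1) * (-1 : ℝ) ^ (ℓ - i) = (-1 : ℝ) ^ (i + 1) := by
    obtain ⟨n, rfl⟩ := Nat.exists_eq_add_of_le hi1
    obtain ⟨m, rfl⟩ := Nat.exists_eq_add_of_le hile
    have h1 : 1 + n + m - 1 = n + m := by omega
    have h2 : 1 + n + m - (1 + n) = m := by omega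
    rw [h1, h2, pow_add, pow_add, pow_add]
    have hsq : (-1 : ℝ) ^ m * (-1 : ℝ) ^ m = 1 := by
      rw [← pow_add]; exact Even.neg_one_pow ⟨m, rfl⟩
    linear_combination ((-1 : ℝ) ^ n) * hsq
  rw [← hcvi]
  rw [← hsign]
  ring
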